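/- Let A be an n×n complex matrix with eigenpair (λ, x), x ≠ 0. Let S ⊊ N be nonempty, p ∈ S with |x_p| = max_{i∈S}|x_i|, q ∈ S̄ with |x_q| = max_{i∈S̄}|x_i|, and suppose |x_p| ≥ |x_q| > 0 and |λ - A p p| > r_p^S(A). Then (|λ - A p p| - r_p^S(A))(|λ - A q q| - r_q^{S̄}(A)) ≤ r_p^{S̄}(A) r_q^S(A). -/

import Mathlib

noncomputable def rT {n : ℕ} (A : Matrix (Fin n) (Fin n) ℂ) (T : Finset (Fin n))
    (i : Fin n) : ℝ :=
  ∑ j ∈ T.erase i, ‖A i j‖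

lemma key_eq {n : ℕ} (A : Matrix (Fin n) (Fin n) ℂ) (lam : ℂ) (x : Fin n → ℂ)
    (heig : A.mulVec x = lam • x) (i : Fin n) :
    (lam - A i i) * x i = ∑ j ∈ Finset.univ.erase i, A i j * x j := by
  have h := congrFun heig i
  simp only [Matrix.mulVec, dotProduct, Pi.smul_apply, smul_eq_mul] at h
  rw [← Finset.add_sum_erase _ (fun j => A i j * x j) (Finset.mem_univ i)] at h
  linear_combination -h

lemma row_bound {n : ℕ} (A : Matrix (Fin n) (Fin n) ℂ) (lam : ℂ) (x : Fin n → ℂ)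
    (heig : A.mulVec x = lam • x) (S : Finset (Fin n)) (i : Fin n) (mS mC : ℝ)
    (hmS : ∀ j ∈ S.erase i, ‖x j‖ ≤ mS)
    (hmC : ∀ j ∈ Sᶜ.erase i, ‖x j‖ ≤ mC) :
    ‖lam - A i i‖ * ‖x i‖ ≤ rT A S i * mS + rT A Sᶜ i * mC := by
  have h1 : ‖(lam - A i i) * x i‖ ≤
      ∑ j ∈ Finset.univ.erase i, ‖A i j‖ * ‖x j‖ := by
    rw [key_eq A lam x heig i]
    exact le_trans (norm_sum_le _ _) (le_of_eq (by simp [map_mul]))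
  rw [norm_mul] at h1
  have hsplit : Finset.univ.erase i = (S.erase i) ∪ (Sᶜ.erase i) := by
    rw [← Finset.erase_union_distrib, Finset.union_compl]
  have hdisj : Disjoint (S.erase i) (Sᶜ.erase i) :=
    (disjoint_compl_right.mono (Finset.erase_subset _ _) (Finset.erase_subset _ _))
  rw [hsplit, Finset.sum_union hdisj] at h1
  refine le_trans h1 (add_le_add ?_ ?_)
  · rw [rT, Finset.sum_mul]
    exact Finset.sum_le_sum fun j hj =>
      mul_le_mul_of_nonneg_left (hmS j hj) (norm_nonneg _)
  · rw [rT, Finset.sum_mul]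
    exact Finset.sum_le_sum fun j hj =>
      mul_le_mul_of_nonneg_left (hmC j hj) (norm_nonneg _)

theorem stmt_17 {n : ℕ} (A : Matrix (Fin n) (Fin n) ℂ)
    (S : Finset (Fin n)) (hS : S.Nonempty) (hSc : Sᶜ.Nonempty)
    (lam : ℂ) (x : Fin n → ℂ) (hx : x ≠ 0) (heig : A.mulVec x = lam • x)
    (p q : Fin n) (hp : p ∈ S) (hq : q ∈ Sᶜ)
    (hpmax : ∀ i ∈ S, ‖x i‖ ≤ ‖x p‖)
    (hqmax : ∀ i ∈ Sᶜ, ‖x i‖ ≤ ‖x q‖)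
    (hq0 : 0 < ‖x q‖) (hpq : ‖x q‖ ≤ ‖x p‖)
    (hgt : rT A S p < ‖lam - A p p‖) :
    (‖lam - A p p‖ - rT A S p) * (‖lam - A q q‖ - rT A Sᶜ q) ≤
      rT A Sᶜ p * rT A S q := by
  have hbp : ‖lam - A p p‖ * ‖x p‖ ≤
      rT A S p * ‖x p‖ + rT A Sᶜ p * ‖x q‖ :=
    row_bound A lam x heig S p _ _
      (fun j hj => hpmax j (Finset.mem_of_mem_erase hj))
      (fun j hj => hqmax j (Finset.mem_of_mem_erase hj))
  have hbq : ‖lam - A q q‖ * ‖x q‖ ≤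
      rT A Sᶜ q * ‖x q‖ + rT A S q * ‖x p‖ := by
    have := row_bound A lam x heig Sᶜ q (‖x q‖) (‖x p‖)
      (fun j hj => hqmax j (Finset.mem_of_mem_erase hj))
      (fun j hj => hpmax j (by simpa using Finset.mem_of_mem_erase hj))
    simpa [compl_compl] using this
  have hc : 0 ≤ rT A Sᶜ p := Finset.sum_nonneg fun j _ => norm_nonneg _
  have hd : 0 ≤ rT A S q := Finset.sum_nonneg fun j _ => norm_nonneg _
  set a := ‖lam - A p p‖ - rT A S p with ha
  set b := ‖lam - A q q‖ - rT A Sᶜ q with hb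
  have ha0 : 0 < a := by simp [ha]; linarith
  rcases le_or_gt b 0 with hb0 | hb0
  · nlinarith
  · have hxp0 : 0 < ‖x p‖ := lt_of_lt_of_le hq0 hpq
    have h1 : a * ‖x p‖ ≤ rT A Sᶜ p * ‖x q‖ := by
      rw [ha]; nlinarith
    have h2 : b * ‖x q‖ ≤ rT A S q * ‖x p‖ := by
      rw [hb]; nlinarith
    have hmul : (a * ‖x p‖) * (b * ‖x q‖) ≤
        (rT A Sᶜ p * ‖x q‖) * (rT A S q * ‖x p‖) := by
      apply mul_le_mul h1 h2 (by positivity) (by nlinarith)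
    nlinarith [mul_pos hxp0 hq0]
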